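/- arXiv:2008.00138 — 3 statements merged into one kernel-verified Lean document; each statement's English description precedes it below -/
import Mathlib

section
/- Let D be a finite nonempty probability space and π̂ : D → Δ^{c−1} a family of strictly positive probability vectors. Define π* componentwise by π*ᵢ = (∏_d π̂ᵢ(d)^{p(d)}) / Z, the normalized weighted geometric mean where p(d) are the probabilities on D and Z = Σⱼ ∏_d π̂ⱼ(d)^{p(d)}. Then for every strictly positive probability vector z ∈ Δ^{c−1}, E_D[D_KL(z ‖ π̂(d))] = D_KL(z ‖ π*) − log Z, and consequently π* is the unique minimizer over the open simplex of z ↦ E_D[D_KL(z ‖ π̂(d))]. -/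
open Finset

/-- The 'KL-mean' predictor π* = argmin_z E_D[D_KL(z ‖ π̂(d))] is the
normalized weighted geometric mean of the predictors:
E_D[D_KL(z ‖ π̂(d))] = D_KL(z ‖ π*) − log Z, and π* is the unique minimizer
over the open simplex. -/
theorem kl_mean_is_normalized_geometric_mean
    {D : Type*} [Fintype D] [Nonempty D] (c : ℕ)
    (p : D → ℝ) (hp0 : ∀ d, 0 ≤ p d) (hp1 : ∑ d, p d = 1)
    (πh : D → Fin c → ℝ)
    (hπh0 : ∀ d i, 0 < πh d i) (hπh1 : ∀ d, ∑ i, πh d i = 1)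
    (Z : ℝ) (hZ : Z = ∑ j, ∏ d, πh d j ^ p d)
    (πs : Fin c → ℝ) (hπs : ∀ i, πs i = (∏ d, πh d i ^ p d) / Z) :
    (∀ z : Fin c → ℝ, (∀ i, 0 < z i) → ∑ i, z i = 1 →
        ∑ d, p d * (∑ i, z i * Real.log (z i / πh d i)) =
          (∑ i, z i * Real.log (z i / πs i)) - Real.log Z)
    ∧
    (∀ z : Fin c → ℝ, (∀ i, 0 < z i) → ∑ i, z i = 1 → z ≠ πs →
        ∑ d, p d * (∑ i, πs i * Real.log (πs i / πh d i)) <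
          ∑ d, p d * (∑ i, z i * Real.log (z i / πh d i))) := by
  -- Positivity of the geometric means
  have hg0 : ∀ i : Fin c, 0 < ∏ d, πh d i ^ p d := fun i =>
    Finset.prod_pos fun d _ => Real.rpow_pos_of_pos (hπh0 d i) _
  -- If there is a z in the simplex, then c ≥ 1 and Z > 0.
  have hZpos : ∀ z : Fin c → ℝ, ∑ i, z i = 1 → 0 < Z := by
    intro z hz1
    have hne : (Finset.univ : Finset (Fin c)).Nonempty := by
      by_contra h
      rw [Finset.not_nonempty_iff_eq_empty] at h
      rw [h, Finset.sum_empty] at hz1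
      norm_num at hz1
    rw [hZ]
    exact Finset.sum_pos (fun j _ => hg0 j) hne
  -- Key part 1
  have part1 : ∀ z : Fin c → ℝ, (∀ i, 0 < z i) → ∑ i, z i = 1 →
      ∑ d, p d * (∑ i, z i * Real.log (z i / πh d i)) =
        (∑ i, z i * Real.log (z i / πs i)) - Real.log Z := by
    intro z hz0 hz1
    have hZp := hZpos z hz1
    have hπsval : ∀ i, Real.log (πs i) =
        (∑ d, p d * Real.log (πh d i)) - Real.log Z := by
      intro i
      rw [hπs i, Real.log_div (ne_of_gt (hg0 i)) (ne_of_gt hZp),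
        Real.log_prod (fun d _ => ne_of_gt (Real.rpow_pos_of_pos (hπh0 d i) _))]
      congr 1
      refine Finset.sum_congr rfl fun d _ => ?_
      rw [Real.log_rpow (hπh0 d i), mul_comm]
    -- rewrite both sides using log of quotients
    have lhs_eq : ∑ d, p d * (∑ i, z i * Real.log (z i / πh d i)) =
        (∑ i, z i * Real.log (z i)) - ∑ i, z i * ∑ d, p d * Real.log (πh d i) := by
      have : ∀ d, (∑ i, z i * Real.log (z i / πh d i)) =
          (∑ i, z i * Real.log (z i)) - ∑ i, z i * Real.log (πh d i) := by
        intro d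
        rw [← Finset.sum_sub_distrib]
        refine Finset.sum_congr rfl fun i _ => ?_
        rw [Real.log_div (ne_of_gt (hz0 i)) (ne_of_gt (hπh0 d i)), mul_sub]
      simp_rw [this, mul_sub, Finset.sum_sub_distrib, ← Finset.sum_mul, hp1, one_mul,
        Finset.mul_sum]
      rw [Finset.sum_comm]
      congr 1
      refine Finset.sum_congr rfl fun i _ => ?_
      refine Finset.sum_congr rfl fun d _ => by ring
    rw [lhs_eq]
    have rhs_eq : (∑ i, z i * Real.log (z i / πs i)) =
        (∑ i, z i * Real.log (z i)) - ∑ i, z i * Real.log (πs i) := by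
      rw [← Finset.sum_sub_distrib]
      refine Finset.sum_congr rfl fun i _ => ?_
      have hπsp : 0 < πs i := by rw [hπs i]; exact div_pos (hg0 i) hZp
      rw [Real.log_div (ne_of_gt (hz0 i)) (ne_of_gt hπsp), mul_sub]
    rw [rhs_eq]
    simp_rw [hπsval, mul_sub, Finset.sum_sub_distrib, ← Finset.sum_mul, hz1, one_mul]
    ring
  refine ⟨part1, ?_⟩
  intro z hz0 hz1 hzne
  have hZp := hZpos z hz1
  have hπs0 : ∀ i, 0 < πs i := fun i => by
    rw [hπs i]; exact div_pos (hg0 i) hZp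
  have hπs1 : ∑ i, πs i = 1 := by
    simp_rw [hπs]
    rw [← Finset.sum_div, ← hZ, div_self (ne_of_gt hZp)]
  rw [part1 z hz0 hz1, part1 πs hπs0 hπs1]
  have hself : (∑ i, πs i * Real.log (πs i / πs i)) = 0 := by
    refine Finset.sum_eq_zero fun i _ => ?_
    rw [div_self (ne_of_gt (hπs0 i)), Real.log_one, mul_zero]
  rw [hself]
  -- Gibbs: 0 < KL(z ‖ πs)
  have gibbs : 0 < ∑ i, z i * Real.log (z i / πs i) := by
    have key : ∑ i, z i * Real.log (πs i / z i) < 0 := by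
      have hle : ∀ i ∈ Finset.univ, z i * Real.log (πs i / z i) ≤ πs i - z i := by
        intro i _
        have h1 : Real.log (πs i / z i) ≤ πs i / z i - 1 :=
          Real.log_le_sub_one_of_pos (div_pos (hπs0 i) (hz0 i))
        calc z i * Real.log (πs i / z i) ≤ z i * (πs i / z i - 1) := by
              exact mul_le_mul_of_nonneg_left h1 (le_of_lt (hz0 i))
          _ = πs i - z i := by
              have := (hz0 i).ne'
              field_simp
      obtain ⟨i0, hi0⟩ : ∃ i, z i ≠ πs i := by
        by_contra h
        push_neg at h
        exact hzne (funext h)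
      have hstrict : z i0 * Real.log (πs i0 / z i0) < πs i0 - z i0 := by
        have hne1 : πs i0 / z i0 ≠ 1 := by
          intro h
          exact hi0 ((div_eq_one_iff_eq (ne_of_gt (hz0 i0))).mp h).symm
        have h1 : Real.log (πs i0 / z i0) < πs i0 / z i0 - 1 :=
          Real.log_lt_sub_one_of_pos (div_pos (hπs0 i0) (hz0 i0)) hne1
        calc z i0 * Real.log (πs i0 / z i0) < z i0 * (πs i0 / z i0 - 1) := by
              exact (mul_lt_mul_iff_right₀ (hz0 i0)).mpr h1
          _ = πs i0 - z i0 := by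
              have := (hz0 i0).ne'
              field_simp
      have := Finset.sum_lt_sum (fun i hi => hle i hi) ⟨i0, Finset.mem_univ i0, hstrict⟩
      rw [Finset.sum_sub_distrib, hπs1, hz1] at this
      linarith
    have flip : ∑ i, z i * Real.log (z i / πs i) = -∑ i, z i * Real.log (πs i / z i) := by
      rw [← Finset.sum_neg_distrib]
      refine Finset.sum_congr rfl fun i _ => ?_
      rw [show z i / πs i = (πs i / z i)⁻¹ by rw [inv_div], Real.log_inv]
      ring
    rw [flip]
    linarith
  linarith
end

section
/- Let X and D be finite nonempty probability spaces, π : X → Δ^{c−1} one-hot ground-truth vectors with class t(x), π̂ : D → X → Δ^{c−1} strictly positive predictors, and π* : X → Δ^{c−1} strictly positive. Then the expected cross-entropy loss satisfies E_{x,d}[−log π̂_{t(x)}(d,x)] = E_x[D_KL(π(x) ‖ π*(x))] + E_{x,d}[D_KL(π*(x) ‖ π̂(d,x))] + E_{x,d}[Σᵢ (πᵢ(x) − π*ᵢ(x)) · log(π*ᵢ(x)/π̂ᵢ(d,x))], and the last term vanishes whenever, for each x, π*(x) is the normalized geometric mean of d ↦ π̂(d,x). -/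
open Finset

/-- Exact bias-variance decomposition of expected cross-entropy loss
(Pfau 2013 / Yang et al. 2020): the expected loss splits into an expected
bias term D_KL(π ‖ π*), a variance term E_D[D_KL(π* ‖ π̂)], and a cross term
which vanishes when π* is the normalized geometric mean of the predictors. -/
theorem expected_crossEntropy_bias_variance_decomposition
    {X D : Type*} [Fintype X] [Fintype D] [Nonempty X] [Nonempty D] (c : ℕ)
    (pX : X → ℝ) (pD : D → ℝ)
    (hpX0 : ∀ x, 0 ≤ pX x) (hpX1 : ∑ x, pX x = 1)
    (hpD0 : ∀ d, 0 ≤ pD d) (hpD1 : ∑ d, pD d = 1)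
    (t : X → Fin c) (π : X → Fin c → ℝ)
    (hπ : ∀ x i, π x i = if i = t x then 1 else 0)
    (πh : D → X → Fin c → ℝ)
    (hπh0 : ∀ d x i, 0 < πh d x i) (hπh1 : ∀ d x, ∑ i, πh d x i = 1)
    (πs : X → Fin c → ℝ)
    (hπs0 : ∀ x i, 0 < πs x i) (hπs1 : ∀ x, ∑ i, πs x i = 1) :
    (∑ x, ∑ d, pX x * pD d * (-Real.log (πh d x (t x))) =
        (∑ x, pX x * ∑ i, π x i * Real.log (π x i / πs x i))
        + (∑ x, ∑ d, pX x * pD d * ∑ i, πs x i * Real.log (πs x i / πh d x i))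
        + (∑ x, ∑ d, pX x * pD d *
            ∑ i, (π x i - πs x i) * Real.log (πs x i / πh d x i)))
    ∧
    ((∀ x i, πs x i = (∏ d, πh d x i ^ pD d) /
        (∑ j, ∏ d, πh d x j ^ pD d)) →
      ∑ x, ∑ d, pX x * pD d *
        ∑ i, (π x i - πs x i) * Real.log (πs x i / πh d x i) = 0) := by
  constructor
  · -- pointwise identity per (x, d)
    have key : ∀ x d, (-Real.log (πh d x (t x))) =
        (∑ i, π x i * Real.log (π x i / πs x i))
        + ((∑ i, πs x i * Real.log (πs x i / πh d x i))
        + (∑ i, (π x i - πs x i) * Real.log (πs x i / πh d x i))) := by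
      intro x d
      have h2 : (∑ i, πs x i * Real.log (πs x i / πh d x i))
          + (∑ i, (π x i - πs x i) * Real.log (πs x i / πh d x i))
          = ∑ i, π x i * Real.log (πs x i / πh d x i) := by
        rw [← Finset.sum_add_distrib]
        refine Finset.sum_congr rfl fun i _ => by ring
      rw [h2, ← Finset.sum_add_distrib]
      have h3 : ∀ i ∈ Finset.univ,
          π x i * Real.log (π x i / πs x i) + π x i * Real.log (πs x i / πh d x i)
          = if i = t x then -Real.log (πh d x (t x)) else 0 := by
        intro i _
        rw [hπ x i]
        by_cases h : i = t x
        · rw [if_pos h, h, one_mul, one_mul,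
              Real.log_div one_ne_zero (ne_of_gt (hπs0 x (t x))),
              Real.log_div (ne_of_gt (hπs0 x (t x))) (ne_of_gt (hπh0 d x (t x))),
              Real.log_one]
          simp only [if_true]
          ring
        · simp [h]
      rw [Finset.sum_congr rfl h3, Finset.sum_ite_eq' Finset.univ (t x)]
      simp
    have step : ∀ x, ∑ d, pX x * pD d * (-Real.log (πh d x (t x)))
        = pX x * ∑ i, π x i * Real.log (π x i / πs x i)
        + ((∑ d, pX x * pD d * ∑ i, πs x i * Real.log (πs x i / πh d x i))
        + (∑ d, pX x * pD d * ∑ i, (π x i - πs x i) * Real.log (πs x i / πh d x i))) := by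
      intro x
      have hA : pX x * ∑ i, π x i * Real.log (π x i / πs x i)
          = ∑ d, pX x * pD d * ∑ i, π x i * Real.log (π x i / πs x i) := by
        rw [← Finset.sum_mul, ← Finset.mul_sum, hpD1]; ring
      rw [hA, ← Finset.sum_add_distrib, ← Finset.sum_add_distrib]
      refine Finset.sum_congr rfl fun d _ => ?_
      rw [key x d]; ring
    calc ∑ x, ∑ d, pX x * pD d * (-Real.log (πh d x (t x)))
        = ∑ x, (pX x * ∑ i, π x i * Real.log (π x i / πs x i)
          + ((∑ d, pX x * pD d * ∑ i, πs x i * Real.log (πs x i / πh d x i))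
          + (∑ d, pX x * pD d * ∑ i, (π x i - πs x i) * Real.log (πs x i / πh d x i)))) :=
          Finset.sum_congr rfl fun x _ => step x
      _ = _ := by rw [Finset.sum_add_distrib, Finset.sum_add_distrib, add_assoc]
  · intro hgeo
    refine Finset.sum_eq_zero fun x _ => ?_
    set S : ℝ := ∑ j, ∏ d, πh d x j ^ pD d with hS
    have hG0 : ∀ i, (0:ℝ) < ∏ d, πh d x i ^ pD d := fun i =>
      Finset.prod_pos fun d _ => Real.rpow_pos_of_pos (hπh0 d x i) _
    have : Nonempty (Fin c) := ⟨t x⟩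
    have hS0 : 0 < S := Finset.sum_pos (fun j _ => hG0 j) Finset.univ_nonempty
    have hlogs : ∀ i, Real.log (πs x i)
        = (∑ d, pD d * Real.log (πh d x i)) - Real.log S := by
      intro i
      rw [hgeo x i, Real.log_div (ne_of_gt (hG0 i)) (ne_of_gt hS0),
        Real.log_prod (fun d _ => ne_of_gt (Real.rpow_pos_of_pos (hπh0 d x i) _))]
      congr 1
      exact Finset.sum_congr rfl fun d _ => Real.log_rpow (hπh0 d x i) _
    have havg : ∀ i, ∑ d, pD d * Real.log (πs x i / πh d x i) = -Real.log S := by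
      intro i
      have : ∀ d ∈ Finset.univ, pD d * Real.log (πs x i / πh d x i)
          = pD d * Real.log (πs x i) - pD d * Real.log (πh d x i) := by
        intro d _
        rw [Real.log_div (ne_of_gt (hπs0 x i)) (ne_of_gt (hπh0 d x i))]; ring
      rw [Finset.sum_congr rfl this, Finset.sum_sub_distrib, ← Finset.sum_mul, hpD1,
        one_mul, hlogs i]
      ring
    have hswap : ∑ d, pX x * pD d * ∑ i, (π x i - πs x i) * Real.log (πs x i / πh d x i)
        = pX x * ∑ i, (π x i - πs x i) * ∑ d, pD d * Real.log (πs x i / πh d x i) := by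
      calc ∑ d, pX x * pD d * ∑ i, (π x i - πs x i) * Real.log (πs x i / πh d x i)
          = ∑ d, ∑ i, pX x * ((π x i - πs x i) * (pD d * Real.log (πs x i / πh d x i))) := by
            refine Finset.sum_congr rfl fun d _ => ?_
            rw [Finset.mul_sum]; exact Finset.sum_congr rfl fun i _ => by ring
        _ = ∑ i, ∑ d, pX x * ((π x i - πs x i) * (pD d * Real.log (πs x i / πh d x i))) :=
            Finset.sum_comm
        _ = pX x * ∑ i, (π x i - πs x i) * ∑ d, pD d * Real.log (πs x i / πh d x i) := by
            simp only [Finset.mul_sum]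
    rw [hswap]
    have : ∑ i, (π x i - πs x i) * ∑ d, pD d * Real.log (πs x i / πh d x i)
        = (∑ i, (π x i - πs x i)) * (-Real.log S) := by
      rw [Finset.sum_mul]
      exact Finset.sum_congr rfl fun i _ => by rw [havg i]
    rw [this, Finset.sum_sub_distrib, hπs1 x]
    have hπ1 : ∑ i, π x i = 1 := by simp [hπ x]
    rw [hπ1]
    ring
end

section
/- Let p(d) be a probability mass function on a finite nonempty set D, and for each d let π̂(d) ∈ Δ^{c−1} be strictly positive. Let π* be the normalized geometric mean: π*ᵢ ∝ ∏_d π̂ᵢ(d)^{p(d)}. Then E_D[D_KL(π* ‖ π̂(d))] = −log Z where Z = Σⱼ ∏_d π̂ⱼ(d)^{p(d)} ≤ 1, so the 'variance' term E_D[D_KL(π* ‖ π̂(d))] equals −log Z ≥ 0, and it is zero if and only if π̂(d) is the same vector for all d in the support of p. -/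
open Finset

/-- Gibbs' inequality for finite probability vectors, with equality case. -/
lemma gibbs_aux {n : ℕ} (q r : Fin n → ℝ) (hq : ∀ i, 0 < q i) (hr : ∀ i, 0 < r i)
    (hq1 : ∑ i, q i = 1) (hr1 : ∑ i, r i = 1) :
    0 ≤ ∑ i, q i * Real.log (q i / r i) ∧
    ((∑ i, q i * Real.log (q i / r i)) = 0 → q = r) := by
  have key : ∀ i, q i - r i ≤ q i * Real.log (q i / r i) := by
    intro i
    have h := Real.log_le_sub_one_of_pos (div_pos (hr i) (hq i))
    have hflip : Real.log (q i / r i) = -Real.log (r i / q i) := by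
      rw [← Real.log_inv, inv_div]
    have hqr : q i * (r i / q i) = r i := by rw [mul_comm]; exact div_mul_cancel₀ _ (hq i).ne'
    rw [hflip]
    nlinarith [hq i, mul_le_mul_of_nonneg_left h (hq i).le]
  have hsum : ∑ i, (q i - r i) = 0 := by
    rw [Finset.sum_sub_distrib, hq1, hr1, sub_self]
  constructor
  · calc (0:ℝ) = ∑ i, (q i - r i) := hsum.symm
      _ ≤ ∑ i, q i * Real.log (q i / r i) := Finset.sum_le_sum fun i _ => key i
  · intro h0
    have hterm : ∀ i ∈ Finset.univ, q i * Real.log (q i / r i) - (q i - r i) = 0 := by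
      apply (Finset.sum_eq_zero_iff_of_nonneg (fun i _ => sub_nonneg.2 (key i))).1
      rw [Finset.sum_sub_distrib, h0, hsum, sub_zero]
    funext i
    by_contra hne
    have hne' : r i / q i ≠ 1 := by
      intro h
      rw [div_eq_one_iff_eq (hq i).ne'] at h
      exact hne h.symm
    have hlt := Real.log_lt_sub_one_of_pos (div_pos (hr i) (hq i)) hne'
    have heq := hterm i (Finset.mem_univ i)
    have hflip : Real.log (q i / r i) = -Real.log (r i / q i) := by
      rw [← Real.log_inv, inv_div]
    have hqr : q i * (r i / q i) = r i := by rw [mul_comm]; exact div_mul_cancel₀ _ (hq i).ne'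
    rw [hflip] at heq
    nlinarith [hq i, mul_lt_mul_of_pos_left hlt (hq i)]

/-- Closed form and nonnegativity of the KL variance term: for the normalized
geometric mean π* of the predictors, E_D[D_KL(π* ‖ π̂(d))] = −log Z with
Z ≤ 1, hence the term is nonnegative, and it vanishes iff π̂(d) is the same
vector for all d in the support of p. -/
theorem kl_variance_term_closed_form
    {D : Type*} [Fintype D] [Nonempty D] (c : ℕ)
    (p : D → ℝ) (hp0 : ∀ d, 0 ≤ p d) (hp1 : ∑ d, p d = 1)
    (πh : D → Fin c → ℝ)
    (hπh0 : ∀ d i, 0 < πh d i) (hπh1 : ∀ d, ∑ i, πh d i = 1)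
    (Z : ℝ) (hZ : Z = ∑ j, ∏ d, πh d j ^ p d)
    (πs : Fin c → ℝ) (hπs : ∀ i, πs i = (∏ d, πh d i ^ p d) / Z) :
    (∑ d, p d * (∑ i, πs i * Real.log (πs i / πh d i)) = -Real.log Z)
    ∧ Z ≤ 1
    ∧ 0 ≤ ∑ d, p d * (∑ i, πs i * Real.log (πs i / πh d i))
    ∧ ((∑ d, p d * (∑ i, πs i * Real.log (πs i / πh d i)) = 0) ↔
        ∀ d d', 0 < p d → 0 < p d' → πh d = πh d') := by
  rcases Nat.eq_zero_or_pos c with hc | hc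
  · subst hc
    have hZ0 : Z = 0 := by simp [hZ]
    refine ⟨by simp [hZ0], by simp [hZ0], by simp, ?_⟩
    constructor
    · intro _ d d' _ _
      funext i
      exact i.elim0
    · intro _
      simp
  · have : Nonempty (Fin c) := ⟨⟨0, hc⟩⟩
    set G : Fin c → ℝ := fun i => ∏ d, πh d i ^ p d with hGdef
    have hGpos : ∀ i, 0 < G i := fun i =>
      Finset.prod_pos fun d _ => Real.rpow_pos_of_pos (hπh0 d i) _
    have hZpos : 0 < Z := by
      rw [hZ]
      exact Finset.sum_pos (fun i _ => hGpos i) Finset.univ_nonempty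
    have hπs_pos : ∀ i, 0 < πs i := fun i => by
      rw [hπs i]; exact div_pos (hGpos i) hZpos
    have hπs_sum : ∑ i, πs i = 1 := by
      rw [Finset.sum_congr rfl fun i _ => hπs i, ← Finset.sum_div, ← hZ,
        div_self hZpos.ne']
    have hlogG : ∀ i, Real.log (G i) = ∑ d, p d * Real.log (πh d i) := by
      intro i
      rw [hGdef]
      rw [Real.log_prod fun d _ => (Real.rpow_pos_of_pos (hπh0 d i) _).ne']
      exact Finset.sum_congr rfl fun d _ => Real.log_rpow (hπh0 d i) _
    have inner : ∀ i, ∑ d, p d * Real.log (πs i / πh d i) = -Real.log Z := by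
      intro i
      have h1 : ∀ d, Real.log (πs i / πh d i)
          = Real.log (πs i) - Real.log (πh d i) :=
        fun d => Real.log_div (hπs_pos i).ne' (hπh0 d i).ne'
      calc ∑ d, p d * Real.log (πs i / πh d i)
          = ∑ d, (p d * Real.log (πs i) - p d * Real.log (πh d i)) := by
            simp_rw [h1, mul_sub]
        _ = (∑ d, p d) * Real.log (πs i) - ∑ d, p d * Real.log (πh d i) := by
            rw [Finset.sum_sub_distrib, Finset.sum_mul]
        _ = Real.log (πs i) - Real.log (G i) := by rw [hp1, one_mul, hlogG]
        _ = -Real.log Z := by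
            rw [hπs i, Real.log_div (hGpos i).ne' hZpos.ne']; ring
    have main : ∑ d, p d * (∑ i, πs i * Real.log (πs i / πh d i)) = -Real.log Z := by
      calc ∑ d, p d * (∑ i, πs i * Real.log (πs i / πh d i))
          = ∑ d, ∑ i, p d * (πs i * Real.log (πs i / πh d i)) := by
            simp_rw [Finset.mul_sum]
        _ = ∑ i, ∑ d, p d * (πs i * Real.log (πs i / πh d i)) := Finset.sum_comm
        _ = ∑ i, πs i * ∑ d, p d * Real.log (πs i / πh d i) := by
            refine Finset.sum_congr rfl fun i _ => ?_
            rw [Finset.mul_sum]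
            exact Finset.sum_congr rfl fun d _ => by ring
        _ = ∑ i, πs i * (-Real.log Z) := by
            exact Finset.sum_congr rfl fun i _ => by rw [inner i]
        _ = -Real.log Z := by rw [← Finset.sum_mul, hπs_sum, one_mul]
    have hKL : ∀ d, 0 ≤ ∑ i, πs i * Real.log (πs i / πh d i) := fun d =>
      (gibbs_aux πs (πh d) hπs_pos (hπh0 d) hπs_sum (hπh1 d)).1
    have hnonneg : 0 ≤ ∑ d, p d * (∑ i, πs i * Real.log (πs i / πh d i)) :=
      Finset.sum_nonneg fun d _ => mul_nonneg (hp0 d) (hKL d)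
    have hZle : Z ≤ 1 := by
      have hlog : Real.log Z ≤ 0 := by
        rw [main] at hnonneg; linarith
      calc Z = Real.exp (Real.log Z) := (Real.exp_log hZpos).symm
        _ ≤ Real.exp 0 := Real.exp_le_exp.2 hlog
        _ = 1 := Real.exp_zero
    refine ⟨main, hZle, hnonneg, ?_⟩
    constructor
    · intro h0 d d' hd hd'
      have hterm : ∀ e ∈ Finset.univ,
          p e * (∑ i, πs i * Real.log (πs i / πh e i)) = 0 :=
        (Finset.sum_eq_zero_iff_of_nonneg
          (fun e _ => mul_nonneg (hp0 e) (hKL e))).1 h0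
      have heq : ∀ e, 0 < p e → πh e = πs := by
        intro e he
        have := hterm e (Finset.mem_univ e)
        have hz : ∑ i, πs i * Real.log (πs i / πh e i) = 0 := by
          rcases mul_eq_zero.1 this with h | h
          · exact absurd h he.ne'
          · exact h
        exact ((gibbs_aux πs (πh e) hπs_pos (hπh0 e) hπs_sum (hπh1 e)).2 hz).symm
      rw [heq d hd, heq d' hd']
    · intro h
      obtain ⟨d₀, hd₀⟩ : ∃ d₀, 0 < p d₀ := by
        by_contra hno
        push_neg at hno
        have : ∀ d, p d = 0 := fun d => le_antisymm (hno d) (hp0 d)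
        simp [this] at hp1
      have hGv : ∀ i, G i = πh d₀ i := by
        intro i
        have hcong : ∀ d ∈ Finset.univ, πh d i ^ p d = πh d₀ i ^ p d := by
          intro d _
          rcases eq_or_lt_of_le (hp0 d) with h0 | hpos
          · rw [← h0, Real.rpow_zero, Real.rpow_zero]
          · rw [h d d₀ hpos hd₀]
        calc G i = ∏ d, πh d₀ i ^ p d := Finset.prod_congr rfl hcong
          _ = πh d₀ i ^ (∑ d, p d) := (Real.rpow_sum_of_pos (hπh0 d₀ i) _ _).symm
          _ = πh d₀ i := by rw [hp1, Real.rpow_one]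
      have hZ1 : Z = 1 := by
        rw [hZ]
        calc (∑ j, ∏ d, πh d j ^ p d) = ∑ j, πh d₀ j :=
              Finset.sum_congr rfl fun j _ => hGv j
          _ = 1 := hπh1 d₀
      rw [main, hZ1, Real.log_one, neg_zero]
end
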